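/- In a finite semiorder, if two bad elements lie on the same level then they are equivalent (i.e., they are comparable to exactly the same elements in the same direction), and no two adjacent levels both contain bad elements. -/
import Mathlib


namespace Paper

/-- Two elements are incomparable. -/
def Incomp {α : Type*} [PartialOrder α] (a b : α) : Prop := ¬ a ≤ b ∧ ¬ b ≤ a

/-- A semiorder: no induced `2+2` and no induced `3+1`. -/
def IsSemiorder (α : Type*) [PartialOrder α] : Prop :=
  (¬ ∃ x y z w : α, y < x ∧ w < z ∧ Incomp x z ∧ Incomp x w ∧ Incomp y z ∧ Incomp y w) ∧
  (¬ ∃ x y z w : α, z < y ∧ y < x ∧ Incomp x w ∧ Incomp y w ∧ Incomp z w)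

/-- There is a chain of `k` elements. -/
def HasChain (α : Type*) [Preorder α] (k : ℕ) : Prop := ∃ c : Fin k → α, StrictMono c

/-- The length of a longest chain (number of edges) is exactly `H`. -/
def HasLength (α : Type*) [Preorder α] (H : ℕ) : Prop :=
  HasChain α (H + 1) ∧ ¬ HasChain α (H + 2)

/-- There is a chain of `k` elements all strictly above `a`. -/
def HasChainAbove {α : Type*} [Preorder α] (a : α) (k : ℕ) : Prop :=
  ∃ c : Fin k → α, StrictMono c ∧ ∀ j, a < c j

/-- `a` is on the `i`-th level (`i ≥ 1`). -/
def OnLevel {α : Type*} [Preorder α] (a : α) (i : ℕ) : Prop :=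
  1 ≤ i ∧ HasChainAbove a (i - 1) ∧ ¬ HasChainAbove a i

/-- Number of isomorphism classes of partial orders on `Fin n` satisfying `pred`. -/
noncomputable def countPosets (n : ℕ) (pred : PartialOrder (Fin n) → Prop) : ℕ :=
  Nat.card (Quot (fun (P Q : {P : PartialOrder (Fin n) // pred P}) =>
    ∃ e : Fin n ≃ Fin n, ∀ a b : Fin n,
      (@LE.le _ P.1.toPreorder.toLE a b ↔ @LE.le _ Q.1.toPreorder.toLE (e a) (e b))))

/-- Semiorder of length exactly `H`. -/
def SemiLen (n H : ℕ) (P : PartialOrder (Fin n)) : Prop :=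
  @IsSemiorder (Fin n) P ∧ @HasLength (Fin n) P.toPreorder H

/-- Semiorder of length at most `h`. -/
def SemiLenLe (n h : ℕ) (P : PartialOrder (Fin n)) : Prop :=
  @IsSemiorder (Fin n) P ∧ ¬ @HasChain (Fin n) P.toPreorder (h + 2)

/-- `f_H^n`. -/
noncomputable def fEx (H n : ℕ) : ℕ := countPosets n (SemiLen n H)

/-- `f_{≤h}^n`. -/
noncomputable def fLe (h n : ℕ) : ℕ := countPosets n (SemiLenLe n h)

/-- Ordered (plane) trees. -/
inductive PTree where
  | node : List PTree → PTree

def PTree.size : PTree → ℕ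
  | .node cs => 1 + (cs.attach.map fun c => PTree.size c.1).sum
decreasing_by have := List.sizeOf_lt_of_mem c.2; simp only [PTree.node.sizeOf_spec] at *; omega

def PTree.height : PTree → ℕ
  | .node cs => (cs.attach.map fun c => PTree.height c.1 + 1).foldr max 0
decreasing_by have := List.sizeOf_lt_of_mem c.2; simp only [PTree.node.sizeOf_spec] at *; omega

def PTree.countDepth : PTree → ℕ → ℕ
  | .node _, 0 => 1
  | .node cs, d + 1 => (cs.attach.map fun c => PTree.countDepth c.1 d).sum
termination_by t _ => sizeOf t
decreasing_by have := List.sizeOf_lt_of_mem c.2; simp only [PTree.node.sizeOf_spec] at *; omega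

/-- Value of a path after the steps in `l` (`true` = up-step, `false` = down-step). -/
def pathVal (l : List Bool) : ℤ := (l.map fun b => if b then (1 : ℤ) else -1).sum

/-- `l` is a Dyck path. -/
def IsDyckPath (l : List Bool) : Prop :=
  pathVal l = 0 ∧ ∀ p, p <+: l → 0 ≤ pathVal p

/-- The height of the path `l` is exactly `H`. -/
def DyckHeightIs (l : List Bool) (H : ℕ) : Prop :=
  (∃ p, p <+: l ∧ pathVal p = H) ∧ ∀ p, p <+: l → pathVal p ≤ (H : ℤ)

/-- Number of peaks of a path. -/
def peaks (l : List Bool) : ℕ :=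
  ((List.range l.length).filter fun i => l.getD i false && !(l.getD (i + 1) true)).length


/-- A bad element of a semiorder. -/
def IsBad {α : Type*} [PartialOrder α] (x : α) : Prop :=
  ∀ i, OnLevel x i →
    ((i = 1 ∨ ∀ b, OnLevel b (i - 1) → x < b) ∧
     ((∃ H, HasLength α H ∧ i = H + 1) ∨ ∀ b, OnLevel b (i + 1) → ¬ b < x))

/-- Two elements are equivalent: comparable with exactly the same elements in the
same direction. -/
def EquivElems {α : Type*} [PartialOrder α] (p p' : α) : Prop :=
  ∀ q : α, (p' < q ↔ p < q) ∧ (q < p' ↔ q < p)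

section AuxBad

variable {α : Type*} [PartialOrder α]

lemma chainAbove_mono {a : α} {j k : ℕ} (h : HasChainAbove a k) (hjk : j ≤ k) :
    HasChainAbove a j := by
  obtain ⟨c, hc, ha⟩ := h
  refine ⟨fun m => c (Fin.castLE hjk m), ?_, fun m => ha _⟩
  intro m m' hlt
  exact hc (show (Fin.castLE hjk m).1 < (Fin.castLE hjk m').1 from hlt)

lemma cons_strictMono {a : α} {k : ℕ} {c : Fin k → α} (hc : StrictMono c)
    (ha : ∀ j, a < c j) : StrictMono (Fin.cases a c : Fin (k + 1) → α) := by
  intro m m' hlt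
  induction m using Fin.cases with
  | zero =>
    induction m' using Fin.cases with
    | zero => exact absurd hlt (lt_irrefl _)
    | succ j => simpa using ha j
  | succ i =>
    induction m' using Fin.cases with
    | zero => exact absurd hlt (Fin.not_lt_zero _)
    | succ j =>
      simpa using hc (Fin.succ_lt_succ_iff.mp hlt)

lemma hasChainAbove_of_lt {a b : α} {k : ℕ} (hab : a < b) (h : HasChainAbove b k) :
    HasChainAbove a (k + 1) := by
  obtain ⟨c, hc, hb⟩ := h
  refine ⟨Fin.cases b c, cons_strictMono hc hb, ?_⟩
  intro j
  induction j using Fin.cases with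
  | zero => simpa using hab
  | succ i => simpa using hab.trans (hb i)

lemma hasChain_of_chainAbove {a : α} {k : ℕ} (h : HasChainAbove a k) :
    HasChain α (k + 1) := by
  obtain ⟨c, hc, hb⟩ := h
  exact ⟨Fin.cases a c, cons_strictMono hc hb⟩

lemma exists_onLevel [Fintype α] (a : α) : ∃ i, OnLevel a i := by
  classical
  have h0 : HasChainAbove a 0 := ⟨Fin.elim0, fun m _ _ => m.elim0, fun j => j.elim0⟩
  have hex : ∃ k, ¬ HasChainAbove a k := by
    refine ⟨Fintype.card α + 1, ?_⟩
    rintro ⟨c, hc, -⟩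
    have := Fintype.card_le_of_injective c hc.injective
    simp at this
  have hNs : ¬ HasChainAbove a (Nat.find hex) := Nat.find_spec hex
  have hN1 : 1 ≤ Nat.find hex := by
    rcases Nat.eq_zero_or_pos (Nat.find hex) with h | h
    · exact absurd (h ▸ h0) hNs
    · exact h
  refine ⟨Nat.find hex, hN1, ?_, hNs⟩
  have := Nat.find_min hex (m := Nat.find hex - 1) (by omega)
  simpa using this

lemma onLevel_unique {a : α} {i j : ℕ} (hi : OnLevel a i) (hj : OnLevel a j) : i = j := by
  by_contra h
  rcases Nat.lt_or_ge i j with hlt | hge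
  · exact hi.2.2 (chainAbove_mono hj.2.1 (by omega))
  · exact hj.2.2 (chainAbove_mono hi.2.1 (by omega))

lemma level_lt_of_lt {a b : α} {i j : ℕ} (hab : a < b) (ha : OnLevel a i)
    (hb : OnLevel b j) : j < i := by
  have h : HasChainAbove a j := by
    have h' := hasChainAbove_of_lt hab hb.2.1
    have hj : j - 1 + 1 = j := by have := hb.1; omega
    rwa [hj] at h'
  by_contra hc
  exact ha.2.2 (chainAbove_mono h (by omega))

lemma exists_lt_onLevel_pred [Fintype α] {a : α} {i : ℕ} (ha : OnLevel a i) (h2 : 2 ≤ i) :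
    ∃ b, a < b ∧ OnLevel b (i - 1) := by
  obtain ⟨c, hc, hab⟩ := ha.2.1
  have h1 : 0 < i - 1 := by omega
  set b := c ⟨0, h1⟩ with hbdef
  obtain ⟨j, hj⟩ := exists_onLevel b
  have hjlt : j < i := level_lt_of_lt (hab _) ha hj
  have htail : HasChainAbove b (i - 2) := by
    refine ⟨fun m => c ⟨m.1 + 1, by have := m.2; omega⟩, ?_, ?_⟩
    · intro m m' hlt
      exact hc (Fin.mk_lt_mk.mpr (Nat.succ_lt_succ (Fin.lt_def.mp hlt)))
    · intro m
      exact hc (Fin.mk_lt_mk.mpr (Nat.succ_pos _))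
  have hnle : ¬ (j ≤ i - 2) := fun hle => hj.2.2 (chainAbove_mono htail hle)
  have hji : j = i - 1 := by omega
  exact ⟨b, hab _, hji ▸ hj⟩

lemma exists_lt_onLevel [Fintype α] {a : α} {i m : ℕ} (ha : OnLevel a i) (h1 : 1 ≤ m)
    (hmi : m < i) : ∃ b, a < b ∧ OnLevel b m := by
  induction i using Nat.strong_induction_on generalizing a with
  | _ i ih =>
    obtain ⟨b, hab, hb⟩ := exists_lt_onLevel_pred ha (by omega)
    rcases eq_or_lt_of_le (show m ≤ i - 1 by omega) with he | hlt
    · exact ⟨b, hab, he ▸ hb⟩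
    · obtain ⟨b', hbb', hb'⟩ := ih (i - 1) (by omega) hb hlt
      exact ⟨b', hab.trans hbb', hb'⟩

lemma bad_lt_of_level_le [Fintype α] (hsemi : IsSemiorder α) {x q : α} {i j : ℕ}
    (hbad : IsBad x) (hx : OnLevel x i) (hq : OnLevel q j) (hji : j + 2 ≤ i) : x < q := by
  by_contra hxq
  have hq1 := hq.1
  obtain ⟨u, hxu, hu⟩ := exists_lt_onLevel_pred hx (by omega)
  obtain ⟨v, huv, hv⟩ := exists_lt_onLevel_pred hu (by omega)
  have hv' : OnLevel v (i - 2) := by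
    have h : i - 1 - 1 = i - 2 := by omega
    rwa [h] at hv
  have hixq : Incomp x q := by
    constructor
    · intro h
      rcases lt_or_eq_of_le h with h | h
      · exact hxq h
      · exact absurd (onLevel_unique (h ▸ hx) hq) (by omega)
    · intro h
      rcases lt_or_eq_of_le h with h | h
      · have := level_lt_of_lt h hq hx
        omega
      · exact absurd (onLevel_unique (h ▸ hq) hx) (by omega)
  have hiuq : Incomp u q := by
    constructor
    · intro h
      rcases lt_or_eq_of_le h with h | h
      · exact hxq (hxu.trans h)
      · exact absurd (onLevel_unique (h ▸ hu) hq) (by omega)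
    · intro h
      rcases lt_or_eq_of_le h with h | h
      · have := level_lt_of_lt h hq hu
        omega
      · exact absurd (onLevel_unique (h ▸ hq) hu) (by omega)
  have hivq : Incomp v q := by
    constructor
    · intro h
      rcases lt_or_eq_of_le h with h | h
      · exact hxq ((hxu.trans huv).trans h)
      · exact hxq (h ▸ (hxu.trans huv))
    · intro h
      rcases lt_or_eq_of_le h with h | h
      · have := level_lt_of_lt h hq hv'
        omega
      · exact hxq (h ▸ (hxu.trans huv))
  exact hsemi.2 ⟨v, u, x, q, hxu, huv, hivq, hiuq, hixq⟩

lemma lt_bad_of_level_ge [Fintype α] (hsemi : IsSemiorder α) {x q : α} {i j : ℕ}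
    (hbad : IsBad x) (hx : OnLevel x i) (hq : OnLevel q j) (hij : i + 2 ≤ j) : q < x := by
  by_contra hqx
  have hx1 := hx.1
  obtain ⟨e, hqe, he⟩ := exists_lt_onLevel (m := i + 1) hq (by omega) (by omega)
  obtain ⟨f, hef, hf0⟩ := exists_lt_onLevel_pred he (by omega)
  have hf : OnLevel f i := by
    have h : i + 1 - 1 = i := by omega
    rwa [h] at hf0
  have hnex : ¬ e < x := by
    rcases (hbad i hx).2 with ⟨H, hH, hiH⟩ | hall
    · intro _
      apply hH.2
      have hc := hasChain_of_chainAbove he.2.1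
      have h : i + 1 - 1 + 1 = H + 2 := by omega
      exact h ▸ hc
    · exact hall e he
  have hiex : Incomp e x := by
    constructor
    · intro h
      rcases lt_or_eq_of_le h with h | h
      · exact hnex h
      · exact absurd (onLevel_unique (h ▸ he) hx) (by omega)
    · intro h
      rcases lt_or_eq_of_le h with h | h
      · have := level_lt_of_lt h hx he
        omega
      · exact absurd (onLevel_unique (h ▸ hx) he) (by omega)
  have hifx : Incomp f x := by
    constructor
    · intro h
      rcases lt_or_eq_of_le h with h | h
      · have := level_lt_of_lt h hf hx
        omega
      · exact hqx (h ▸ (hqe.trans hef))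
    · intro h
      rcases lt_or_eq_of_le h with h | h
      · have := level_lt_of_lt h hx hf
        omega
      · exact hqx (h ▸ (hqe.trans hef))
  have hiqx : Incomp q x := by
    constructor
    · intro h
      rcases lt_or_eq_of_le h with h | h
      · exact hqx h
      · exact absurd (onLevel_unique (h ▸ hq) hx) (by omega)
    · intro h
      rcases lt_or_eq_of_le h with h | h
      · have := level_lt_of_lt h hx hq
        omega
      · exact absurd (onLevel_unique (h ▸ hx) hq) (by omega)
  exact hsemi.2 ⟨f, e, q, x, hqe, hef, hifx, hiex, hiqx⟩

lemma bad_forward [Fintype α] (hsemi : IsSemiorder α) {x y q : α} {i : ℕ}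
    (hbx : IsBad x) (hx : OnLevel x i) (hy : OnLevel y i) (hyq : y < q) : x < q := by
  obtain ⟨j, hq⟩ := exists_onLevel q
  have hji : j < i := level_lt_of_lt hyq hy hq
  have hq1 := hq.1
  rcases eq_or_lt_of_le (show j ≤ i - 1 by omega) with he | hlt
  · rcases (hbx i hx).1 with h1 | hall
    · omega
    · exact hall q (he ▸ hq)
  · exact bad_lt_of_level_le hsemi hbx hx hq (by omega)

lemma bad_backward [Fintype α] (hsemi : IsSemiorder α) {x y q : α} {i : ℕ}
    (hbx : IsBad x) (hby : IsBad y) (hx : OnLevel x i) (hy : OnLevel y i)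
    (hqy : q < y) : q < x := by
  obtain ⟨j, hq⟩ := exists_onLevel q
  have hij : i < j := level_lt_of_lt hqy hq hy
  have hq1 := hq.1
  rcases eq_or_lt_of_le (show i + 1 ≤ j by omega) with he | hlt
  · exfalso
    rcases (hby i hy).2 with ⟨H, hH, hiH⟩ | hall
    · apply hH.2
      have hc := hasChain_of_chainAbove hq.2.1
      have h : j - 1 + 1 = H + 2 := by omega
      exact h ▸ hc
    · exact hall q (he ▸ hq) hqy
  · exact lt_bad_of_level_ge hsemi hbx hx hq (by omega)

end AuxBad

theorem statement9 {α : Type*} [Fintype α] [PartialOrder α] (hsemi : IsSemiorder α) :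
    (∀ (x y : α) (i : ℕ), IsBad x → IsBad y → OnLevel x i → OnLevel y i → EquivElems x y) ∧
    (∀ (x y : α) (i : ℕ), IsBad x → IsBad y → OnLevel x i → ¬ OnLevel y (i + 1)) := by
  constructor
  · intro x y i hbx hby hx hy q
    refine ⟨⟨fun h => bad_forward hsemi hbx hx hy h, fun h => bad_forward hsemi hby hy hx h⟩,
      fun h => bad_backward hsemi hbx hby hx hy h, fun h => bad_backward hsemi hby hbx hy hx h⟩
  · intro x y i hbx hby hx hy1
    have hx1 := hx.1
    have hyx : y < x := by
      rcases (hby (i + 1) hy1).1 with h1 | hall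
      · omega
      · have h : i + 1 - 1 = i := by omega
        exact hall x (by rw [h]; exact hx)
    rcases (hbx i hx).2 with ⟨H, hH, hiH⟩ | hall
    · apply hH.2
      have hc := hasChain_of_chainAbove hy1.2.1
      have h : i + 1 - 1 + 1 = H + 2 := by omega
      exact h ▸ hc
    · exact hall y hy1 hyx

end Paper
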